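/- The function φ(x, q) = e^{k x²/2}(q − x⁴) intertwines the invariant vector fields ξ_i on ℝ⁴ with the vector fields ζ_i on ℝ: for each i ∈ {1,2,3,4} and all x ∈ ℝ⁴, q ∈ ℝ, Σ_j ξ_i^j(x) · (∂φ/∂x^j)(x, q) = ζ_i(φ(x, q)), where ζ₁ = ζ₃ = 0, ζ₂(q) = 1, and ζ₄(q) = −(k/2) q. -/

import Mathlib

/-- Partial derivative `∂f/∂xⁱ` of a real-valued function on `ℝ⁴`. -/
noncomputable def pd (i : Fin 4) (f : (Fin 4 → ℝ) → ℝ) (x : Fin 4 → ℝ) : ℝ :=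
  fderiv ℝ f x (Pi.single i 1)
/-- The invariant vector fields `ξ₁,…,ξ₄` (indices `0,…,3`). -/
noncomputable def ξ (k : ℝ) (i : Fin 4) (x : Fin 4 → ℝ) : Fin 4 → ℝ :=
  ![![-1, 0, 0, 0],
    ![-k * x 2 * Real.exp (-(k * x 1) / 2), 0, 0, -Real.exp (-(k * x 1) / 2)],
    ![0, 0, -Real.exp (k * x 1 / 2), 0],
    ![2, -1, 0, 0]] i

/-- The map `φ : ℝ⁴ × ℝ → ℝ`, `φ(x,q) = e^{k x²/2}(q − x⁴)`. -/
noncomputable def φmap (k : ℝ) (x : Fin 4 → ℝ) (q : ℝ) : ℝ :=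
  Real.exp (k * x 1 / 2) * (q - x 3)

/-- The vector fields `ζ₁ = 0`, `ζ₂ = 1`, `ζ₃ = 0`, `ζ₄(q) = −(k/2) q` on `ℝ`. -/
noncomputable def ζ (k : ℝ) (i : Fin 4) (q : ℝ) : ℝ :=
  ![0, 1, 0, -(k / 2) * q] i


/-- Coordinate projection as a continuous linear map. -/
noncomputable def pr (i : Fin 4) : (Fin 4 → ℝ) →L[ℝ] ℝ :=
  ContinuousLinearMap.proj (R := ℝ) (φ := fun _ : Fin 4 => ℝ) i

@[simp] lemma pr_apply (i : Fin 4) (v : Fin 4 → ℝ) : pr i v = v i := rfl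

lemma phi_hasFDerivAt (k : ℝ) (q : ℝ) (x : Fin 4 → ℝ) :
    HasFDerivAt (fun y => φmap k y q)
      (Real.exp (k * x 1 / 2) • ((0 : (Fin 4 → ℝ) →L[ℝ] ℝ) - pr 3)
        + (q - x 3) • (Real.exp (k * x 1 / 2) • ((k / 2) • (pr 1 :
            (Fin 4 → ℝ) →L[ℝ] ℝ)))) x := by
  have h1 : HasFDerivAt (fun y : Fin 4 → ℝ => y 1)
      (pr 1) x := hasFDerivAt_apply (𝕜 := ℝ) (1 : Fin 4) x
  have h3 : HasFDerivAt (fun y : Fin 4 → ℝ => y 3)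
      (pr 3) x := hasFDerivAt_apply (𝕜 := ℝ) (3 : Fin 4) x
  have hinner : HasFDerivAt (fun y : Fin 4 → ℝ => k * y 1 / 2)
      ((k / 2) • pr 1) x := by
    have := h1.const_mul (k / 2)
    have e : (fun y : Fin 4 → ℝ => k * y 1 / 2) = fun y => k / 2 * y 1 := by
      funext y
      ring
    rw [e]; exact this
  have hexp : HasFDerivAt (fun y : Fin 4 → ℝ => Real.exp (k * y 1 / 2))
      (Real.exp (k * x 1 / 2) • ((k / 2) • (pr 1 :
        (Fin 4 → ℝ) →L[ℝ] ℝ))) x :=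
    hinner.exp
  have hsub : HasFDerivAt (fun y : Fin 4 → ℝ => q - y 3)
      ((0 : (Fin 4 → ℝ) →L[ℝ] ℝ) - pr 3) x :=
    (hasFDerivAt_const q x).sub h3
  exact hexp.mul hsub

lemma pd_phi (k : ℝ) (q : ℝ) (x : Fin 4 → ℝ) (j : Fin 4) :
    pd j (fun y => φmap k y q) x =
      Real.exp (k * x 1 / 2) * (-((Pi.single j 1 : Fin 4 → ℝ) 3)
        + (q - x 3) * ((k / 2) * (Pi.single j 1 : Fin 4 → ℝ) 1)) := by
  rw [pd, (phi_hasFDerivAt k q x).fderiv]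
  simp [ContinuousLinearMap.proj_apply]
  ring

/-- The map `φ` intertwines the invariant fields `ξ_i` on `ℝ⁴` with the
fields `ζ_i` on `ℝ`: `Σ_j ξ_i^j(x) ∂φ/∂x^j(x,q) = ζ_i(φ(x,q))`. -/
theorem phi_intertwines (k : ℝ) (hk : 0 < k) (i : Fin 4) (x : Fin 4 → ℝ) (q : ℝ) :
    ∑ j : Fin 4, ξ k i x j * pd j (fun y => φmap k y q) x = ζ k i (φmap k x q) := by
  have he : Real.exp (-(k * x 1) / 2) * Real.exp (k * x 1 / 2) = 1 := by
    rw [← Real.exp_add]; ring_nf; exact Real.exp_zero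
  simp only [Fin.sum_univ_four, pd_phi]
  fin_cases i <;>
    simp [ξ, ζ, φmap, Pi.single_apply, Matrix.vecHead, Matrix.vecTail] <;>
    nlinarith [he]
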